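/- For all n ≥ 1, the number of 2-ascent sequences of length n with pairwise distinct entries equals 1 + C(n, 2). -/

import Mathlib

/-- Number of ascents of a sequence: indices j with a_j < a_{j+1}. -/
def ascN (l : List ℕ) : ℕ := (l.zip l.tail).countP (fun q => decide (q.1 < q.2))

/-- `a` is a p-ascent sequence: nonempty, starts with 0, and each later entry
is at most `p` plus the number of ascents of the preceding prefix. -/
def IsPAsc (p : ℕ) (a : List ℕ) : Prop :=
  a.head? = some 0 ∧ ∀ i : Fin a.length, 1 ≤ i.val → a.get i ≤ p + ascN (a.take i.val)

def Avoids01 (a : List ℕ) : Prop := ∀ i j : Fin a.length, i < j → ¬ a.get i < a.get j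

def Avoids10 (a : List ℕ) : Prop := ∀ i j : Fin a.length, i < j → ¬ a.get j < a.get i

def Avoids012 (a : List ℕ) : Prop :=
  ∀ i j k : Fin a.length, i < j → j < k → ¬ (a.get i < a.get j ∧ a.get j < a.get k)

/-- primitive: no two equal consecutive letters -/
def Primitive (a : List ℕ) : Prop := a.Chain' (· ≠ ·)

/-! ### generic ascN lemmas -/

lemma ascN_nil : ascN [] = 0 := rfl
lemma ascN_single (a : ℕ) : ascN [a] = 0 := rfl

lemma ascN_cons_cons (a c : ℕ) (t : List ℕ) :
    ascN (a :: c :: t) = (if a < c then 1 else 0) + ascN (c :: t) := by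
  simp [ascN, List.countP_cons]
  omega

lemma ascN_le (l : List ℕ) : ascN l ≤ l.length - 1 := by
  have := List.countP_le_length (l := l.zip l.tail) (p := fun q => decide (q.1 < q.2))
  have h2 : (l.zip l.tail).length = min l.length (l.length - 1) := by
    simp [List.length_zip]
  simp only [ascN]
  omega

lemma ascN_append (l1 l2 : List ℕ) (h1 : l1 ≠ []) (h2 : l2 ≠ []) :
    ascN (l1 ++ l2) = ascN l1 + ascN l2 +
      (if l1.getLast h1 < l2.head h2 then 1 else 0) := by
  induction l1 with
  | nil => simp at h1
  | cons a t ih =>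
    cases t with
    | nil =>
      cases l2 with
      | nil => simp at h2
      | cons c t2 =>
        show ascN (a :: c :: t2) = _
        rw [ascN_cons_cons]
        show _ = 0 + _ + (if a < c then 1 else 0)
        omega
    | cons b t1 =>
      have hne : (b :: t1) ≠ [] := by simp
      have := ih hne
      simp only [List.cons_append] at *
      rw [ascN_cons_cons, ascN_cons_cons, this, List.getLast_cons hne]
      omega

lemma ascN_of_chain' (l : List ℕ) (h : l.Chain' (· < ·)) : ascN l = l.length - 1 := by
  induction l with
  | nil => rfl
  | cons a t ih =>
    cases t with
    | nil => rfl
    | cons c t2 =>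
      simp only [List.Chain', List.isChain_cons_cons] at h
      rw [ascN_cons_cons, ih h.2, if_pos h.1]
      simp
      omega

/-! ### IsPAsc append characterization -/

lemma isPAsc_append (p : ℕ) (b : List ℕ) (hb : b ≠ []) (v : ℕ) :
    IsPAsc p (b ++ [v]) ↔ IsPAsc p b ∧ v ≤ p + ascN b := by
  have hlen : (b ++ [v]).length = b.length + 1 := by simp
  constructor
  · rintro ⟨h0, h⟩
    have hbl : 1 ≤ b.length := List.length_pos_iff.mpr hb
    refine ⟨⟨?_, ?_⟩, ?_⟩
    · rw [List.head?_append_of_ne_nil _ hb] at h0; exact h0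
    · intro i hi
      have hi' : i.val < (b ++ [v]).length := by omega
      have := h ⟨i.val, hi'⟩ hi
      simp only [List.get_eq_getElem] at this ⊢
      rwa [List.getElem_append_left i.2,
        List.take_append_of_le_length (le_of_lt i.2)] at this
  
    · have hi' : b.length < (b ++ [v]).length := by omega
      have H := h ⟨b.length, hi'⟩ hbl
      simp only [List.get_eq_getElem] at H
      rwa [List.getElem_concat_length rfl, List.take_left] at H
  · rintro ⟨⟨h0, h⟩, hv⟩
    refine ⟨?_, ?_⟩
    · rwa [List.head?_append_of_ne_nil _ hb]
    · intro i hi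
      simp only [List.get_eq_getElem]
      have hi2 : i.val < b.length + 1 := by have := i.2; omega
      rcases lt_or_eq_of_le (Nat.lt_succ_iff.mp hi2) with hlt | heq
      · rw [List.getElem_append_left hlt, List.take_append_of_le_length (le_of_lt hlt)]
        exact h ⟨i.val, hlt⟩ hi
      · have e1 : (b ++ [v])[(i : ℕ)]'i.2 = v := List.getElem_concat_length heq _
        have e2 : List.take (i : ℕ) (b ++ [v]) = b := by rw [heq]; exact List.take_left
        rw [e1, e2]
        exact hv

lemma getLast_congr {l l' : List ℕ} (h : l = l') (h1 : l ≠ []) :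
    l.getLast h1 = l'.getLast (h ▸ h1) := by subst h; rfl

lemma getLast_range' : ∀ (m a : ℕ) (h : List.range' a (m+1) ≠ []),
    (List.range' a (m+1)).getLast h = a + m := by
  intro m
  induction m with
  | zero => intro a h; simp [List.range'_one]
  | succ m ih =>
    intro a h
    have hne : List.range' (a+1) (m+1) ≠ [] := by
      apply List.ne_nil_of_length_pos; simp
    have e : List.range' a (m+1+1) = a :: List.range' (a+1) (m+1) := List.range'_succ
    rw [getLast_congr e, List.getLast_cons hne, ih]
    omega

/-! ### the explicit families -/

def upL (k n : ℕ) : List ℕ := List.range k ++ List.range' (k+1) (n-k)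

def dnL (k j n : ℕ) : List ℕ := upL k (j+1) ++ k :: List.range' (j+2) (n-2-j)

lemma mem_upL {k n m : ℕ} (hk : k ≤ n) : m ∈ upL k n ↔ m ≤ n ∧ m ≠ k := by
  simp [upL, List.mem_range, List.mem_range'_1]
  omega

lemma length_upL {k n : ℕ} (hk : k ≤ n) : (upL k n).length = n := by
  simp [upL]; omega

lemma pairwise_upL (k n : ℕ) : (upL k n).Pairwise (· < ·) := by
  apply List.pairwise_append.mpr
  refine ⟨List.pairwise_lt_range, List.pairwise_lt_range', ?_⟩
  intro a ha b hb
  simp [List.mem_range] at ha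
  simp [List.mem_range'_1] at hb
  omega

lemma chain'_upL (k n : ℕ) : (upL k n).Chain' (· < ·) :=
  (pairwise_upL k n).isChain

lemma nodup_upL (k n : ℕ) : (upL k n).Nodup :=
  (pairwise_upL k n).imp Nat.ne_of_lt

lemma ascN_upL {k n : ℕ} (hk : k ≤ n) : ascN (upL k n) = n - 1 := by
  rw [ascN_of_chain' _ (chain'_upL k n), length_upL hk]

lemma upL_ne_nil {k n : ℕ} (hk : k ≤ n) (hn : 1 ≤ n) : upL k n ≠ [] := by
  intro h
  have := length_upL hk
  rw [h] at this
  simp at this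
  omega

lemma getLast_upL {k n : ℕ} (hk1 : 1 ≤ k) (hk : k ≤ n) (h : upL k n ≠ []) :
    (upL k n).getLast h = if k = n then n - 1 else n := by
  rcases eq_or_lt_of_le hk with rfl | hlt
  · obtain ⟨m, rfl⟩ : ∃ m, k = m + 1 := ⟨k - 1, by omega⟩
    have hu : upL (m+1) (m+1) = List.range m ++ [m] := by
      simp [upL, List.range_succ]
    rw [getLast_congr hu, List.getLast_append_singleton]
    simp
  · rw [if_neg (by omega)]
    have h3 : n - k = (n - k - 1) + 1 := by omega
    have hne : List.range' (k+1) (n-k) ≠ [] := by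
      rw [h3, List.range'_succ]; simp
    rw [getLast_congr (show upL k n = List.range k ++ List.range' (k+1) (n-k) from rfl)]
    rw [List.getLast_append_of_ne_nil _ hne]
    rw [getLast_congr (show List.range' (k+1) (n-k) = List.range' (k+1) ((n-k-1)+1) by rw [← h3])]
    rw [getLast_range']
    omega

/-! dn lemmas -/

lemma mem_dnL {k j n m : ℕ} (hk1 : 1 ≤ k) (hkj : k ≤ j) (hj : j + 2 ≤ n) :
    m ∈ dnL k j n ↔ m < n := by
  simp [dnL, mem_upL (show k ≤ j + 1 by omega), List.mem_range'_1]
  omega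

lemma length_dnL {k j n : ℕ} (hkj : k ≤ j) (hj : j + 2 ≤ n) :
    (dnL k j n).length = n := by
  simp [dnL, length_upL (show k ≤ j + 1 by omega)]
  omega

lemma nodup_dnL {k j n : ℕ} (hk1 : 1 ≤ k) (hkj : k ≤ j) (hj : j + 2 ≤ n) :
    (dnL k j n).Nodup := by
  rw [dnL, List.nodup_append]
  refine ⟨nodup_upL _ _, ?_, ?_⟩
  · rw [List.nodup_cons]
    refine ⟨?_, List.nodup_range'⟩
    simp [List.mem_range'_1]; omega
  · intro a ha b hb
    rw [mem_upL (show k ≤ j + 1 by omega)] at ha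
    simp [List.mem_range'_1] at hb
    omega

lemma ascN_dnL {k j n : ℕ} (hk1 : 1 ≤ k) (hkj : k ≤ j) (hj : j + 2 ≤ n) :
    ascN (dnL k j n) = n - 2 := by
  have h1 : upL k (j+1) ≠ [] := upL_ne_nil (by omega) (by omega)
  have h2 : (k :: List.range' (j+2) (n-2-j)) ≠ [] := by simp
  rw [dnL, ascN_append _ _ h1 h2]
  rw [ascN_upL (show k ≤ j + 1 by omega)]
  rw [getLast_upL hk1 (by omega) h1]
  have hch : (k :: List.range' (j+2) (n-2-j)).Chain' (· < ·) := by
    apply List.Pairwise.isChain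
    rw [List.pairwise_cons]
    refine ⟨?_, (List.pairwise_lt_range')⟩
    intro a ha
    simp [List.mem_range'_1] at ha
    omega
  rw [ascN_of_chain' _ hch]
  simp only [List.head_cons, List.length_cons, List.length_range']
  split_ifs <;> omega

/-! concatenation identities -/

lemma upL_succ {k n : ℕ} (hk : k ≤ n) : upL k (n+1) = upL k n ++ [n+1] := by
  have h : n + 1 - k = (n - k) + 1 := by omega
  simp only [upL, h, List.range'_concat, ← List.append_assoc]
  congr 2
  omega

lemma upL_top (n : ℕ) (hn : 1 ≤ n) : upL (n+1) (n+1) = upL n n ++ [n] := by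
  simp [upL, List.range_succ]

lemma dnL_eq_upL_append {k n : ℕ} (hk1 : 1 ≤ k) (hk : k + 1 ≤ n) :
    dnL k (n-1) (n+1) = upL k n ++ [k] := by
  have h1 : n - 1 + 1 = n := by omega
  have h2 : n + 1 - 2 - (n - 1) = 0 := by omega
  simp [dnL, h1, h2]

lemma dnL_succ {k j n : ℕ} (hkj : k ≤ j) (hj : j + 2 ≤ n) :
    dnL k j (n+1) = dnL k j n ++ [n] := by
  have h : n + 1 - 2 - j = (n - 2 - j) + 1 := by omega
  simp only [dnL, h, List.range'_concat, List.append_assoc, List.cons_append, List.nil_append]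
  congr 3
  rw [show j + 2 + 1 * (n - 2 - j) = n by omega]

/-! ### Finset of valid sequences -/

def ext2 (b : List ℕ) : Finset (List ℕ) :=
  ((Finset.range (3 + ascN b)).filter (fun v => v ∉ b)).image (fun v => b ++ [v])

def V : ℕ → Finset (List ℕ)
  | 0 => ∅
  | 1 => {[0]}
  | (n+2) => (V (n+1)).biUnion ext2

lemma V_succ (n : ℕ) (hn : 1 ≤ n) : V (n+1) = (V n).biUnion ext2 := by
  obtain ⟨m, rfl⟩ : ∃ m, n = m + 1 := ⟨n - 1, by omega⟩
  rfl

lemma mem_ext2 {b a : List ℕ} : a ∈ ext2 b ↔ ∃ v, v < 3 + ascN b ∧ v ∉ b ∧ a = b ++ [v] := by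
  simp [ext2, Finset.mem_image, Finset.mem_filter, Finset.mem_range]
  constructor
  · rintro ⟨v, ⟨h1, h2⟩, rfl⟩; exact ⟨v, h1, h2, rfl⟩
  · rintro ⟨v, h1, h2, rfl⟩; exact ⟨v, ⟨h1, h2⟩, rfl⟩

lemma ext2_upL {k n : ℕ} (hk1 : 1 ≤ k) (hk : k ≤ n) :
    ext2 (upL k n) = {upL k n ++ [k], upL k n ++ [n+1]} := by
  ext a
  rw [mem_ext2]
  simp only [Finset.mem_insert, Finset.mem_singleton]
  rw [ascN_upL hk]
  constructor
  · rintro ⟨v, hv1, hv2, rfl⟩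
    rw [mem_upL hk] at hv2
    have : v = k ∨ v = n + 1 := by omega
    rcases this with rfl | rfl
    · left; rfl
    · right; rfl
  · rintro (rfl | rfl)
    · exact ⟨k, by omega, by rw [mem_upL hk]; omega, rfl⟩
    · exact ⟨n+1, by omega, by rw [mem_upL hk]; omega, rfl⟩

lemma ext2_dnL {k j n : ℕ} (hk1 : 1 ≤ k) (hkj : k ≤ j) (hj : j + 2 ≤ n) :
    ext2 (dnL k j n) = {dnL k j n ++ [n]} := by
  ext a
  rw [mem_ext2]
  simp only [Finset.mem_singleton]
  rw [ascN_dnL hk1 hkj hj]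
  constructor
  · rintro ⟨v, hv1, hv2, rfl⟩
    rw [mem_dnL hk1 hkj hj] at hv2
    have : v = n := by omega
    subst this; rfl
  · rintro rfl
    exact ⟨n, by omega, by rw [mem_dnL hk1 hkj hj]; omega, rfl⟩

def GoodI (n : ℕ) (b : List ℕ) : Prop := ∃ k, 1 ≤ k ∧ k ≤ n ∧ b = upL k n
def GoodD (n : ℕ) (b : List ℕ) : Prop := ∃ k j, 1 ≤ k ∧ k ≤ j ∧ j + 2 ≤ n ∧ b = dnL k j n

lemma invariant (n : ℕ) (hn : 1 ≤ n) :
    (∀ b ∈ V n, GoodI n b ∨ GoodD n b) ∧ (∀ k, 1 ≤ k → k ≤ n → upL k n ∈ V n) := by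
  induction n, hn using Nat.le_induction with
  | base =>
    constructor
    · intro b hb
      have hb : b = [0] := by simpa [V] using hb
      subst hb
      exact Or.inl ⟨1, le_rfl, le_rfl, by decide⟩
    · intro k hk1 hk
      have : k = 1 := by omega
      subst this
      show upL 1 1 ∈ {[0]}
      rw [show upL 1 1 = [0] by decide]
      exact Finset.mem_singleton_self _
  | succ n hn IH =>
    constructor
    · intro b hb
      rw [V_succ n hn, Finset.mem_biUnion] at hb
      obtain ⟨c, hc, hbc⟩ := hb
      rcases IH.1 c hc with ⟨k, hk1, hk, rfl⟩ | ⟨k, j, hk1, hkj, hj, rfl⟩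
      · rw [ext2_upL hk1 hk] at hbc
        simp only [Finset.mem_insert, Finset.mem_singleton] at hbc
        rcases hbc with rfl | rfl
        · rcases eq_or_lt_of_le hk with rfl | hlt
          · exact Or.inl ⟨k + 1, by omega, le_rfl, (upL_top k hk1).symm⟩
          · exact Or.inr ⟨k, n - 1, hk1, by omega, by omega,
              by rw [dnL_eq_upL_append hk1 (by omega)]⟩
        · exact Or.inl ⟨k, hk1, by omega, (upL_succ hk).symm⟩
      · rw [ext2_dnL hk1 hkj hj] at hbc
        rw [Finset.mem_singleton] at hbc
        subst hbc
        exact Or.inr ⟨k, j, hk1, hkj, by omega, (dnL_succ hkj hj).symm⟩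
    · intro k hk1 hk
      rw [V_succ n hn, Finset.mem_biUnion]
      rcases eq_or_lt_of_le hk with heq | hlt
      · refine ⟨upL n n, IH.2 n hn le_rfl, ?_⟩
        rw [ext2_upL hn le_rfl]
        subst heq
        simp only [Finset.mem_insert, Finset.mem_singleton]
        exact Or.inl (upL_top n hn)
      · have hk' : k ≤ n := by omega
        refine ⟨upL k n, IH.2 k hk1 hk', ?_⟩
        rw [ext2_upL hk1 hk']
        simp only [Finset.mem_insert, Finset.mem_singleton]
        exact Or.inr (upL_succ hk')

lemma length_of_mem_V {n : ℕ} (hn : 1 ≤ n) {b : List ℕ} (hb : b ∈ V n) :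
    b.length = n := by
  rcases (invariant n hn).1 b hb with ⟨k, hk1, hk, rfl⟩ | ⟨k, j, hk1, hkj, hj, rfl⟩
  · exact length_upL hk
  · exact length_dnL hkj hj

lemma card_V (n : ℕ) (hn : 1 ≤ n) : (V n).card = 1 + n.choose 2 := by
  induction n, hn using Nat.le_induction with
  | base => simp [V]
  | succ n hn IH =>
    rw [V_succ n hn]
    have hdisj : ∀ x ∈ V n, ∀ y ∈ V n, x ≠ y → Disjoint (ext2 x) (ext2 y) := by
      intro x hx y hy hxy
      rw [Finset.disjoint_left]
      intro a hax hay
      rw [mem_ext2] at hax hay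
      obtain ⟨v, _, _, rfl⟩ := hax
      obtain ⟨w, _, _, he⟩ := hay
      apply hxy
      have hl : x.length = y.length := by
        rw [length_of_mem_V hn hx, length_of_mem_V hn hy]
      have := congrArg (fun l => List.take x.length l) he
      simpa [List.take_left, hl, List.take_left' hl.symm] using this
    rw [Finset.card_biUnion hdisj]
    have hsplit := Finset.sum_filter_add_sum_filter_not (V n)
      (fun b => ascN b = n - 1) (fun b => (ext2 b).card)
    rw [← hsplit]
    have h2 : ∀ b ∈ (V n).filter (fun b => ascN b = n - 1), (ext2 b).card = 2 := by
      intro b hb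
      rw [Finset.mem_filter] at hb
      rcases (invariant n hn).1 b hb.1 with ⟨k, hk1, hk, rfl⟩ | ⟨k, j, hk1, hkj, hj, rfl⟩
      · rw [ext2_upL hk1 hk]
        rw [Finset.card_insert_of_notMem, Finset.card_singleton]
        rw [Finset.mem_singleton]
        intro h
        have := List.append_cancel_left h
        simp at this
        omega
      · exfalso
        have := hb.2
        rw [ascN_dnL hk1 hkj hj] at this
        omega
    have h1 : ∀ b ∈ (V n).filter (fun b => ¬ ascN b = n - 1), (ext2 b).card = 1 := by
      intro b hb
      rw [Finset.mem_filter] at hb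
      rcases (invariant n hn).1 b hb.1 with ⟨k, hk1, hk, rfl⟩ | ⟨k, j, hk1, hkj, hj, rfl⟩
      · exact absurd (ascN_upL hk) hb.2
      · rw [ext2_dnL hk1 hkj hj, Finset.card_singleton]
    rw [Finset.sum_congr rfl h2, Finset.sum_congr rfl h1]
    rw [Finset.sum_const, Finset.sum_const, smul_eq_mul, smul_eq_mul]
    have hfilt : (V n).filter (fun b => ascN b = n - 1)
        = (Finset.Icc 1 n).image (fun k => upL k n) := by
      ext b
      rw [Finset.mem_filter, Finset.mem_image]
      constructor
      · rintro ⟨hb, hasc⟩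
        rcases (invariant n hn).1 b hb with ⟨k, hk1, hk, rfl⟩ | ⟨k, j, hk1, hkj, hj, rfl⟩
        · exact ⟨k, Finset.mem_Icc.mpr ⟨hk1, hk⟩, rfl⟩
        · rw [ascN_dnL hk1 hkj hj] at hasc
          omega
      · rintro ⟨k, hk, rfl⟩
        rw [Finset.mem_Icc] at hk
        exact ⟨(invariant n hn).2 k hk.1 hk.2, ascN_upL hk.2⟩
    have hinj : Set.InjOn (fun k => upL k n) (Finset.Icc 1 n) := by
      intro k hk k' hk' h
      simp only [Finset.coe_Icc, Set.mem_Icc] at hk hk'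
      by_contra hne
      have h1 : k' ∈ upL k n := (mem_upL hk.2).mpr ⟨hk'.2, fun hh => hne hh.symm⟩
      rw [show upL k n = upL k' n from h] at h1
      rw [mem_upL hk'.2] at h1
      exact h1.2 rfl
    have hcardP : ((V n).filter (fun b => ascN b = n - 1)).card = n := by
      rw [hfilt, Finset.card_image_of_injOn hinj, Nat.card_Icc]
      omega
    have hcards := Finset.card_filter_add_card_filter_not
      (s := V n) (p := fun b => ascN b = n - 1)
    rw [IH] at hcards
    rw [hcardP] at hcards ⊢
    have hch : (n+1).choose 2 = n.choose 2 + n := by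
      rw [Nat.choose_succ_succ]
      simp [Nat.choose_one_right]
      omega
    omega

lemma setEq (n : ℕ) (hn : 1 ≤ n) :
    {a : List ℕ | a.length = n ∧ IsPAsc 2 a ∧ a.Nodup} = ↑(V n) := by
  induction n, hn using Nat.le_induction with
  | base =>
    ext a
    simp only [Set.mem_setOf_eq, V, Finset.coe_singleton, Set.mem_singleton_iff]
    constructor
    · rintro ⟨hlen, ⟨h0, _⟩, _⟩
      obtain ⟨x, rfl⟩ := List.length_eq_one_iff.mp hlen
      simp only [List.head?_cons, Option.some.injEq] at h0
      rw [h0]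
    · rintro rfl
      refine ⟨rfl, ⟨rfl, ?_⟩, by simp⟩
      intro i hi
      have := i.2
      simp only [List.length_cons, List.length_nil] at this
      omega
  | succ n hn IH =>
    ext a
    simp only [Set.mem_setOf_eq, Finset.mem_coe]
    rw [V_succ n hn, Finset.mem_biUnion]
    constructor
    · rintro ⟨hlen, hasc, hnd⟩
      have ha : a ≠ [] := by
        intro h; rw [h] at hlen; simp at hlen
      have hab : a.dropLast ++ [a.getLast ha] = a := List.dropLast_append_getLast ha
      set b := a.dropLast with hbdef
      set v := a.getLast ha with hvdef
      have hbl : b.length = n := by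
        have := congrArg List.length hab
        simp at this
        omega
      have hbne : b ≠ [] := by
        intro h; rw [h] at hbl; simp at hbl; omega
      rw [← hab] at hasc hnd
      rw [isPAsc_append 2 b hbne v] at hasc
      rw [List.nodup_append] at hnd
      have hvb : v ∉ b := by
        intro hv
        exact hnd.2.2 v hv v (List.mem_singleton_self v) rfl
      have hbV : b ∈ V n := by
        have : b ∈ {a : List ℕ | a.length = n ∧ IsPAsc 2 a ∧ a.Nodup} :=
          ⟨hbl, hasc.1, hnd.1⟩
        rwa [IH] at this
      refine ⟨b, hbV, ?_⟩
      rw [mem_ext2]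
      exact ⟨v, by omega, hvb, hab.symm⟩
    · rintro ⟨b, hbV, hext⟩
      rw [mem_ext2] at hext
      obtain ⟨v, hv1, hv2, rfl⟩ := hext
      have hb : b ∈ {a : List ℕ | a.length = n ∧ IsPAsc 2 a ∧ a.Nodup} := by
        rw [IH]; exact hbV
      obtain ⟨hbl, hbasc, hbnd⟩ := hb
      have hbne : b ≠ [] := by
        intro h; rw [h] at hbl; simp at hbl; omega
      refine ⟨by simp [hbl], ?_, ?_⟩
      · rw [isPAsc_append 2 b hbne v]
        exact ⟨hbasc, by omega⟩
      · rw [List.nodup_append]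
        exact ⟨hbnd, List.nodup_singleton v, by
          intro x hx y hx'
          rw [List.mem_singleton] at hx'
          subst hx'
          exact fun h => hv2 (h ▸ hx)⟩

theorem stmt6 (n : ℕ) (hn : 1 ≤ n) :
    Set.ncard {a : List ℕ | a.length = n ∧ IsPAsc 2 a ∧ a.Nodup} = 1 + n.choose 2 := by
  rw [setEq n hn, Set.ncard_coe_finset, card_V n hn]
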